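/- The map sending a connected block graph on n vertices to its weighted block tree is a bijection (up to isomorphism) between connected block graphs on n vertices and weighted block trees of total weight n. -/

import Mathlib

open SimpleGraph
open scoped Classical

/-- v is a cut vertex: its removal disconnects two vertices that were connected. -/
def IsCutVertex {V : Type*} (G : SimpleGraph V) (v : V) : Prop :=
  ∃ a b : ({u : V | u ≠ v} : Set V),
    G.Reachable a.1 b.1 ∧ ¬ (G.induce {u : V | u ≠ v}).Reachable a b

/-- B is a nonempty biconnected set: the induced subgraph is connected and remains
connected (in the sense of pairwise reachability) after removing any one vertex. -/
def IsBiconn {V : Type*} (G : SimpleGraph V) (B : Set V) : Prop :=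
  B.Nonempty ∧ (∀ x y : B, (G.induce B).Reachable x y) ∧
  ∀ b ∈ B, ∀ x y : ↥(B \ {b}), (G.induce (B \ {b})).Reachable x y

/-- A block is a maximal biconnected set of vertices. -/
def IsBlock {V : Type*} (G : SimpleGraph V) (B : Set V) : Prop :=
  IsBiconn G B ∧ ∀ B', B ⊆ B' → IsBiconn G B' → B = B'

/-- Vertex set of the block tree of G: cut vertices and blocks. -/
def BTVert {V : Type*} (G : SimpleGraph V) : Type _ :=
  {v : V // IsCutVertex G v} ⊕ {B : Set V // IsBlock G B}

/-- The block tree of G: a cut vertex v is adjacent to a block B iff v ∈ B. -/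
def blockTree {V : Type*} (G : SimpleGraph V) : SimpleGraph (BTVert G) where
  Adj x y :=
    (∃ v B, x = Sum.inl v ∧ y = Sum.inr B ∧ v.1 ∈ B.1) ∨
    (∃ v B, x = Sum.inr B ∧ y = Sum.inl v ∧ v.1 ∈ B.1)
  symm := by
    constructor
    rintro x y (⟨v, B, rfl, rfl, h⟩ | ⟨v, B, rfl, rfl, h⟩)
    · exact Or.inr ⟨v, B, rfl, rfl, h⟩
    · exact Or.inl ⟨v, B, rfl, rfl, h⟩
  loopless := by
    constructor
    rintro x (⟨v, B, rfl, h, -⟩ | ⟨v, B, rfl, h, -⟩) <;> simp at h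

/-- The weight function of the weighted block tree: cut vertices weigh 1 and a block
weighs its number of non-cut vertices. -/
noncomputable def btWeight {V : Type*} (G : SimpleGraph V) : BTVert G → ℕ :=
  Sum.elim (fun _ => 1) (fun B => (B.1 \ {v | IsCutVertex G v}).ncard)

/-- A leaf is a vertex with exactly one neighbor. -/
def IsLeaf {V : Type*} (T : SimpleGraph V) (v : V) : Prop :=
  (T.neighborSet v).ncard = 1
/-- A block graph: every block is a clique. -/
def IsBlockGraph {V : Type*} (G : SimpleGraph V) : Prop :=
  ∀ B : Set V, IsBlock G B → ∀ u ∈ B, ∀ v ∈ B, u ≠ v → G.Adj u v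

/-- Isomorphism of weighted block trees. -/
def BTIso {V V' : Type*} (G : SimpleGraph V) (G' : SimpleGraph V') : Prop :=
  ∃ e : BTVert G ≃ BTVert G',
    (∀ x y, (blockTree G).Adj x y ↔ (blockTree G').Adj (e x) (e y)) ∧
    ∀ x, btWeight G' (e x) = btWeight G x

namespace BG
open SimpleGraph

variable {V : Type*} {G : SimpleGraph V}

/-- Reachability within a set `S` (endpoints included). -/
def RIn (G : SimpleGraph V) (S : Set V) (a b : V) : Prop :=
  ∃ p : G.Walk a b, ∀ x ∈ p.support, x ∈ S

lemma RIn.mono {S S' : Set V} (h : S ⊆ S') {a b : V} (hr : RIn G S a b) : RIn G S' a b := by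
  obtain ⟨p, hp⟩ := hr
  exact ⟨p, fun x hx => h (hp x hx)⟩

lemma RIn.refl {S : Set V} {a : V} (ha : a ∈ S) : RIn G S a a :=
  ⟨SimpleGraph.Walk.nil, by intro x hx; simp at hx; subst hx; exact ha⟩

lemma RIn.symm {S : Set V} {a b : V} (h : RIn G S a b) : RIn G S b a := by
  obtain ⟨p, hp⟩ := h
  exact ⟨p.reverse, fun x hx => hp x (by simpa [SimpleGraph.Walk.support_reverse] using hx)⟩

lemma RIn.trans {S : Set V} {a b c : V} (h1 : RIn G S a b) (h2 : RIn G S b c) : RIn G S a c := by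
  obtain ⟨p, hp⟩ := h1
  obtain ⟨q, hq⟩ := h2
  refine ⟨p.append q, fun x hx => ?_⟩
  rw [SimpleGraph.Walk.support_append, List.mem_append] at hx
  rcases hx with hx | hx
  · exact hp x hx
  · exact hq x (List.mem_of_mem_tail hx)

lemma RIn.left_mem {S : Set V} {a b : V} (h : RIn G S a b) : a ∈ S := by
  obtain ⟨p, hp⟩ := h; exact hp a p.start_mem_support

lemma RIn.right_mem {S : Set V} {a b : V} (h : RIn G S a b) : b ∈ S := by
  obtain ⟨p, hp⟩ := h; exact hp b p.end_mem_support

lemma RIn.of_adj {S : Set V} {a b : V} (h : G.Adj a b) (ha : a ∈ S) (hb : b ∈ S) :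
    RIn G S a b := by
  refine ⟨h.toWalk, fun x hx => ?_⟩
  simp [SimpleGraph.Walk.support_cons] at hx
  rcases hx with rfl | rfl
  · exact ha
  · exact hb

/-- transfer a walk into the induced subgraph -/
lemma reachable_induce_of_rIn {S : Set V} {a b : V} (h : RIn G S a b) :
    (G.induce S).Reachable ⟨a, h.left_mem⟩ ⟨b, h.right_mem⟩ := by
  obtain ⟨p, hp⟩ := h
  induction p with
  | nil => rfl
  | @cons u x w huv q ih =>
      have hu : u ∈ S := hp u (by simp [SimpleGraph.Walk.support_cons])
      have hx : x ∈ S := hp x (by simp [SimpleGraph.Walk.support_cons])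
      have hq : ∀ z ∈ q.support, z ∈ S := fun z hz =>
        hp z (by simp [SimpleGraph.Walk.support_cons, hz])
      have h1 : (G.induce S).Adj ⟨u, hu⟩ ⟨x, hx⟩ := huv
      exact h1.reachable.trans (ih hq)

lemma rIn_of_reachable_induce {S : Set V} {a b : S}
    (h : (G.induce S).Reachable a b) : RIn G S a.1 b.1 := by
  obtain ⟨p⟩ := h
  induction p with
  | nil => exact RIn.refl (Subtype.mem _)
  | @cons u x w huv q ih =>
      exact (RIn.of_adj (G := G) (show G.Adj u.1 x.1 from huv) u.2 x.2).trans ih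

lemma rIn_iff_reachable_induce {S : Set V} {a b : V} (ha : a ∈ S) (hb : b ∈ S) :
    RIn G S a b ↔ (G.induce S).Reachable ⟨a, ha⟩ ⟨b, hb⟩ := by
  constructor
  · exact fun h => reachable_induce_of_rIn h
  · exact fun h => rIn_of_reachable_induce h

lemma rIn_univ_iff_reachable {a b : V} : RIn G Set.univ a b ↔ G.Reachable a b := by
  constructor
  · rintro ⟨p, -⟩; exact ⟨p⟩
  · rintro ⟨p⟩; exact ⟨p, fun x _ => trivial⟩

/-- Upgrade to a path realizing `RIn`. -/
lemma RIn.exists_path {S : Set V} {a b : V} (h : RIn G S a b) :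
    ∃ p : G.Walk a b, p.IsPath ∧ ∀ x ∈ p.support, x ∈ S := by
  classical
  obtain ⟨p, hp⟩ := h
  exact ⟨p.bypass, p.bypass_isPath, fun x hx => hp x (p.support_bypass_subset hx)⟩

/-- Splitting a path at a vertex: one of the two sides avoids `w`. -/
lemma split_avoid {a b z w : V} (p : G.Walk a b) (hp : p.IsPath) (hz : z ∈ p.support)
    (hwz : w ≠ z) :
    (∃ q : G.Walk z a, (∀ x ∈ q.support, x ∈ p.support) ∧ w ∉ q.support) ∨
    (∃ q : G.Walk z b, (∀ x ∈ q.support, x ∈ p.support) ∧ w ∉ q.support) := by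
  classical
  by_cases hw : w ∈ (p.takeUntil z hz).support
  · right
    refine ⟨p.dropUntil z hz, fun x hx => p.support_dropUntil_subset hz hx, ?_⟩
    intro hw2
    have hnd := hp.support_nodup
    have hspec := p.take_spec hz
    have : p.support = (p.takeUntil z hz).support ++ (p.dropUntil z hz).support.tail := by
      rw [← SimpleGraph.Walk.support_append, hspec]
    rw [this] at hnd
    have hdisj := List.disjoint_of_nodup_append hnd
    have hw3 : w ∈ (p.dropUntil z hz).support.tail := by
      have := (p.dropUntil z hz).support_eq_cons
      rw [this] at hw2
      rcases List.mem_cons.mp hw2 with h | h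
      · exact absurd h hwz
      · exact h
    exact hdisj hw hw3
  · left
    exact ⟨(p.takeUntil z hz).reverse,
      fun x hx => p.support_takeUntil_subset hz (by
        simpa [SimpleGraph.Walk.support_reverse] using hx),
      by simpa [SimpleGraph.Walk.support_reverse] using hw⟩

end BG

namespace BG
open SimpleGraph

variable {V : Type*} {G : SimpleGraph V}

lemma isBiconn_iff {B : Set V} :
    IsBiconn G B ↔ B.Nonempty ∧ (∀ x ∈ B, ∀ y ∈ B, RIn G B x y) ∧
      (∀ b ∈ B, ∀ x ∈ B \ {b}, ∀ y ∈ B \ {b}, RIn G (B \ {b}) x y) := by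
  constructor
  · rintro ⟨hne, hconn, hrem⟩
    refine ⟨hne, fun x hx y hy => ?_, fun b hb x hx y hy => ?_⟩
    · exact (rIn_iff_reachable_induce hx hy).2 (hconn ⟨x, hx⟩ ⟨y, hy⟩)
    · exact (rIn_iff_reachable_induce hx hy).2 (hrem b hb ⟨x, hx⟩ ⟨y, hy⟩)
  · rintro ⟨hne, hconn, hrem⟩
    refine ⟨hne, fun x y => ?_, fun b hb x y => ?_⟩
    · have := hconn x.1 x.2 y.1 y.2
      exact (rIn_iff_reachable_induce x.2 y.2).1 this
    · have := hrem b hb x.1 x.2 y.1 y.2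
      have h2 := (rIn_iff_reachable_induce x.2 y.2).1 this
      convert h2 <;> simp

lemma biconn_singleton (v : V) : IsBiconn G {v} := by
  rw [isBiconn_iff]
  refine ⟨⟨v, rfl⟩, ?_, ?_⟩
  · rintro x rfl y rfl
    exact RIn.refl rfl
  · rintro b rfl x hx
    simp at hx

lemma biconn_pair {u v : V} (h : G.Adj u v) : IsBiconn G {u, v} := by
  rw [isBiconn_iff]
  refine ⟨⟨u, by simp⟩, ?_, ?_⟩
  · rintro x hx y hy
    rcases hx with rfl | rfl <;> rcases hy with rfl | rfl
    · exact RIn.refl (by simp)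
    · exact RIn.of_adj h (by simp) (by simp)
    · exact (RIn.of_adj h (by simp) (by simp)).symm
    · exact RIn.refl (by simp)
  · rintro b hb x hx y hy
    have hxy : x = y := by
      rcases hb with rfl | rfl
      · rcases hx.1 with rfl | rfl
        · exact absurd rfl hx.2
        · rcases hy.1 with rfl | rfl
          · exact absurd rfl hy.2
          · rfl
      · rcases hx.1 with rfl | rfl
        · rcases hy.1 with rfl | rfl
          · rfl
          · exact absurd rfl hy.2
        · exact absurd rfl hx.2
    subst hxy
    exact RIn.refl hx

variable [Finite V]

lemma exists_block_superset {S : Set V} (hS : IsBiconn G S) :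
    ∃ B, S ⊆ B ∧ IsBlock G B := by
  classical
  set fam : Set (Set V) := {T | S ⊆ T ∧ IsBiconn G T} with hfam
  have hfin : fam.Finite := Set.toFinite _
  have hne : fam.Nonempty := ⟨S, subset_rfl, hS⟩
  obtain ⟨B, hB, hmax⟩ := Set.Finite.exists_maximalFor Set.ncard fam hfin (by exact hne)
  refine ⟨B, hB.1, hB.2, fun B' hBB' hB' => ?_⟩
  have hB'fam : B' ∈ fam := ⟨hB.1.trans hBB', hB'⟩
  have hcard : B.ncard ≤ B'.ncard := Set.ncard_le_ncard hBB' (Set.toFinite _)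
  have := hmax hB'fam hcard
  exact Set.eq_of_subset_of_ncard_le hBB' this.ge (Set.toFinite _)

lemma exists_block_mem (v : V) : ∃ B, IsBlock G B ∧ v ∈ B := by
  obtain ⟨B, hsub, hB⟩ := exists_block_superset (biconn_singleton v)
  exact ⟨B, hB, hsub rfl⟩

lemma block_nonempty' {B : Set V} (hB : IsBlock G B) : B.Nonempty := hB.1.1

lemma block_rIn {B : Set V} (hB : IsBlock G B) {x y : V} (hx : x ∈ B) (hy : y ∈ B) :
    RIn G B x y := (isBiconn_iff.1 hB.1).2.1 x hx y hy

lemma block_rIn_remove {B : Set V} (hB : IsBlock G B) (w : V) {x y : V}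
    (hx : x ∈ B \ {w}) (hy : y ∈ B \ {w}) : RIn G (B \ {w}) x y := by
  by_cases hw : w ∈ B
  · exact (isBiconn_iff.1 hB.1).2.2 w hw x hx y hy
  · have : B \ {w} = B := by
      ext z; simp only [Set.mem_diff, Set.mem_singleton_iff]
      exact ⟨fun h => h.1, fun h => ⟨h, fun hzw => hw (hzw ▸ h)⟩⟩
    rw [this] at hx hy ⊢
    exact block_rIn hB hx hy

/-- The ring lemma: there is no cyclic arrangement of `m ≥ 2` distinct blocks
joined by distinct link vertices. -/
lemma ring_lemma {m : ℕ} (hm : 2 ≤ m) (C : ZMod m → Set V) (u : ZMod m → V)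
    (hC : ∀ i, IsBlock G (C i)) (hCinj : Function.Injective C)
    (huinj : Function.Injective u)
    (hu : ∀ i, u i ∈ C i ∧ u i ∈ C (i + 1)) : False := by
  haveI : NeZero m := ⟨by omega⟩
  set U : Set V := ⋃ i, C i with hU
  have hsub : ∀ i, C i ⊆ U := fun i => Set.subset_iUnion C i
  -- connectivity
  have hconn : ∀ k : ℕ, ∀ x ∈ C (k : ZMod m), RIn G U x (u 0) := by
    intro k
    induction k with
    | zero =>
        intro x hx
        have h00 : (((0:ℕ) : ZMod m)) = 0 := by push_cast; ring
        rw [h00] at hx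
        exact (block_rIn (hC 0) hx (hu 0).1).mono (hsub 0)
    | succ k ih =>
        intro x hx
        have h1 : u (k : ZMod m) ∈ C ((k : ZMod m) + 1) := (hu _).2
        have hcast : ((k + 1 : ℕ) : ZMod m) = (k : ZMod m) + 1 := by push_cast; ring
        rw [hcast] at hx
        have h2 : RIn G U x (u (k : ZMod m)) :=
          (block_rIn (hC _) hx h1).mono (hsub _)
        exact h2.trans (ih _ (hu _).1)
  have hidx : ∀ j : ZMod m, ∃ k : ℕ, (k : ZMod m) = j ∧ k < m :=
    fun j => ⟨j.val, ZMod.natCast_rightInverse j, ZMod.val_lt j⟩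
  have hconn' : ∀ x ∈ U, RIn G U x (u 0) := by
    intro x hx
    obtain ⟨j, hj⟩ := Set.mem_iUnion.1 hx
    obtain ⟨k, hk, -⟩ := hidx j
    exact hconn k x (hk ▸ hj)
  -- removal
  have hrem : ∀ w ∈ U, ∀ x ∈ U \ {w}, ∀ y ∈ U \ {w}, RIn G (U \ {w}) x y := by
    intro w hw x hx y hy
    -- rotation offset
    classical
    set i0 : ZMod m := if h : ∃ i, u i = w then h.choose + 1 else 0 with hi0
    set C' : ZMod m → Set V := fun j => C (j + i0) with hC'
    set u' : ZMod m → V := fun j => u (j + i0) with hu'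
    have hbroken : ∀ j : ZMod m, u' j = w → j = -1 := by
      intro j hj
      by_cases h : ∃ i, u i = w
      · have hi0e : i0 = h.choose + 1 := by simp [hi0, h]
        have h1 : u (j + i0) = u h.choose := by
          rw [show u (j + i0) = u' j from rfl, hj, h.choose_spec]
        have h2 := huinj h1
        rw [hi0e] at h2
        have h3 : j = h.choose - (h.choose + 1) := by
          rw [eq_sub_iff_add_eq]; exact h2
        rw [h3]; ring
      · exact absurd ⟨_, hj⟩ h
    have hu'mem : ∀ j, u' j ∈ C' j ∧ u' j ∈ C' (j + 1) := by
      intro j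
      refine ⟨(hu _).1, ?_⟩
      have h1 := (hu (j + i0)).2
      rwa [show (j + i0) + 1 = (j + 1) + i0 by ring] at h1
    have hkne : ∀ k : ℕ, k + 1 < m → (k : ZMod m) ≠ -1 := by
      intro k hk he
      have h1 : ((k + 1 : ℕ) : ZMod m) = 0 := by push_cast; rw [he]; ring
      rw [ZMod.natCast_eq_zero_iff] at h1
      have := Nat.le_of_dvd (by omega) h1
      omega
    have hCsub : ∀ j, C' j \ {w} ⊆ U \ {w} := by
      intro j x hx
      exact ⟨hsub _ hx.1, hx.2⟩
    have hQ : ∀ k : ℕ, k < m → ∀ x ∈ C' (k : ZMod m) \ {w}, RIn G (U \ {w}) x (u' 0) := by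
      intro k
      induction k with
      | zero =>
          intro _ x hx
          have hne0 : u' 0 ≠ w := fun he => hkne 0 (by omega) (by
            have := hbroken 0 he; simpa using this)
          have hm0 : u' 0 ∈ C' 0 \ {w} := ⟨(hu'mem 0).1, hne0⟩
          have hx0 : x ∈ C' 0 \ {w} := by
            have h00 : (((0:ℕ) : ZMod m)) = 0 := by push_cast; ring
            rwa [h00] at hx
          exact (block_rIn_remove (hC _) w hx0 hm0).mono (hCsub 0)
      | succ k ih =>
          intro hk x hx
          have hnek : u' (k : ZMod m) ≠ w := fun he => hkne k (by omega) (hbroken _ he)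
          have hcast : ((k + 1 : ℕ) : ZMod m) = (k : ZMod m) + 1 := by push_cast; ring
          rw [hcast] at hx
          have hmk : u' (k : ZMod m) ∈ C' ((k : ZMod m) + 1) \ {w} := ⟨(hu'mem _).2, hnek⟩
          have h1 : RIn G (U \ {w}) x (u' (k : ZMod m)) :=
            (block_rIn_remove (hC _) w hx hmk).mono (hCsub _)
          have h2 : u' (k : ZMod m) ∈ C' (k : ZMod m) \ {w} := ⟨(hu'mem _).1, hnek⟩
          exact h1.trans (ih (by omega) _ h2)
    have hhub : ∀ x ∈ U \ {w}, RIn G (U \ {w}) x (u' 0) := by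
      intro x hx
      obtain ⟨j, hj⟩ := Set.mem_iUnion.1 hx.1
      have hj' : x ∈ C' (j - i0) \ {w} := by
        refine ⟨?_, hx.2⟩
        show x ∈ C ((j - i0) + i0)
        rwa [show (j - i0) + i0 = j by ring]
      obtain ⟨k, hk, hklt⟩ := hidx (j - i0)
      rw [← hk] at hj'
      exact hQ k hklt x hj'
    exact (hhub x hx).trans (hhub y hy).symm
  -- U is biconnected
  have hbic : IsBiconn G U := by
    rw [isBiconn_iff]
    exact ⟨⟨u 0, hsub 0 (hu 0).1⟩,
      fun x hx y hy => (hconn' x hx).trans (hconn' y hy).symm, hrem⟩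
  have h1 : C 0 = U := (hC 0).2 U (hsub 0) hbic
  have h2 : C 1 ⊆ C 0 := h1 ▸ hsub 1
  have h3 : C 1 = C 0 := (hC 1).2 (C 0) h2 (hC 0).1
  have h4 := hCinj h3
  have h5 : ((1:ℕ) : ZMod m) = 0 := by push_cast; exact h4
  rw [ZMod.natCast_eq_zero_iff] at h5
  have := Nat.le_of_dvd one_pos h5
  omega

end BG

namespace BG
open SimpleGraph

variable {V : Type*} {G : SimpleGraph V} [Finite V]

/-- Two vertices share a block. -/
def Share (G : SimpleGraph V) (u v : V) : Prop := ∃ B, IsBlock G B ∧ u ∈ B ∧ v ∈ B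

lemma share_refl (v : V) : Share G v v := by
  obtain ⟨B, hB, hv⟩ := exists_block_mem (G := G) v
  exact ⟨B, hB, hv, hv⟩

lemma Share.symm {u v : V} (h : Share G u v) : Share G v u := by
  obtain ⟨B, hB, h1, h2⟩ := h; exact ⟨B, hB, h2, h1⟩

lemma share_of_adj {u v : V} (h : G.Adj u v) : Share G u v := by
  obtain ⟨B, hsub, hB⟩ := exists_block_superset (biconn_pair h)
  exact ⟨B, hB, hsub (by simp), hsub (by simp)⟩

/-- distinct blocks meet in at most one vertex -/
lemma blocks_inter_eq {B B' : Set V} (hB : IsBlock G B) (hB' : IsBlock G B')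
    {x y : V} (hx : x ∈ B ∩ B') (hy : y ∈ B ∩ B') (hxy : x ≠ y) : B = B' := by
  by_contra hne
  have henum : ∀ i : ZMod 2, i = 0 ∨ i = 1 := by decide
  have f10 : (1 : ZMod 2) ≠ 0 := by decide
  have f01 : (0 : ZMod 2) ≠ 1 := by decide
  have hne' : B' ≠ B := fun h => hne h.symm
  have hyx : y ≠ x := fun h => hxy h.symm
  refine ring_lemma (G := G) (le_refl 2) (fun i => if i = 0 then B else B')
    (fun i => if i = 0 then x else y) ?_ ?_ ?_ ?_
  · intro i; rcases henum i with rfl | rfl <;> simp_all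
  · intro i j hij
    rcases henum i with rfl | rfl <;> rcases henum j with rfl | rfl <;> simp_all
  · intro i j hij
    rcases henum i with rfl | rfl <;> rcases henum j with rfl | rfl <;> simp_all
  · intro i
    rcases henum i with rfl | rfl
    · have h01 : (0 : ZMod 2) + 1 = 1 := by decide
      rw [h01]; simp_all
    · have h11 : (1 : ZMod 2) + 1 = 0 := by decide
      rw [h11]; simp_all

/-- a set pairwise sharing blocks lies in one block -/
lemma pairwise_share_sub_block {P : Set V} (hne : P.Nonempty)
    (hP : ∀ x ∈ P, ∀ y ∈ P, Share G x y) : ∃ D, IsBlock G D ∧ P ⊆ D := by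
  obtain ⟨v0, hv0⟩ := hne
  by_cases htriv : ∀ x ∈ P, x = v0
  · obtain ⟨D, hD, hmem⟩ := exists_block_mem (G := G) v0
    exact ⟨D, hD, fun x hx => (htriv x hx) ▸ hmem⟩
  push_neg at htriv
  obtain ⟨u0, hu0, hu0v0⟩ := htriv
  obtain ⟨D, hD, hu0D, hv0D⟩ := hP u0 hu0 v0 hv0
  refine ⟨D, hD, fun x hx => ?_⟩
  by_cases hxu : x = u0
  · exact hxu ▸ hu0D
  by_cases hxv : x = v0
  · exact hxv ▸ hv0D
  obtain ⟨D1, hD1, hxD1, hu0D1⟩ := hP x hx u0 hu0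
  obtain ⟨D2, hD2, hxD2, hv0D2⟩ := hP x hx v0 hv0
  by_cases h1 : D1 = D
  · exact h1 ▸ hxD1
  by_cases h2 : D2 = D
  · exact h2 ▸ hxD2
  by_cases h12 : D1 = D2
  · -- u0, v0 ∈ D1 ∩ D
    subst h12
    have : D1 = D := blocks_inter_eq hD1 hD ⟨hu0D1, hu0D⟩ ⟨hv0D2, hv0D⟩ hu0v0
    exact absurd this h1
  -- genuine 3-ring
  exfalso
  have henum : ∀ i : ZMod 3, i = 0 ∨ i = 1 ∨ i = 2 := by decide
  have e20 : (2 : ZMod 3) ≠ 0 := by decide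
  have e21 : (2 : ZMod 3) ≠ 1 := by decide
  have e10 : (1 : ZMod 3) ≠ 0 := by decide
  have e01 : (0 : ZMod 3) ≠ 1 := by decide
  have e02 : (0 : ZMod 3) ≠ 2 := by decide
  have e12 : (1 : ZMod 3) ≠ 2 := by decide
  have h1' : D ≠ D1 := fun h => h1 h.symm
  have h2' : D ≠ D2 := fun h => h2 h.symm
  have h12' : D2 ≠ D1 := fun h => h12 h.symm
  have hxu' : u0 ≠ x := fun h => hxu h.symm
  have hxv' : v0 ≠ x := fun h => hxv h.symm
  have hvu : v0 ≠ u0 := fun h => hu0v0 h.symm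
  refine ring_lemma (G := G) (m := 3) (by norm_num) (fun i => if i = 0 then D1 else if i = 1 then D2 else D)
    (fun i => if i = 0 then x else if i = 1 then v0 else u0) ?_ ?_ ?_ ?_
  · intro i; rcases henum i with rfl | rfl | rfl <;> simp_all
  · intro i j hij
    rcases henum i with rfl | rfl | rfl <;> rcases henum j with rfl | rfl | rfl <;>
      simp_all
  · intro i j hij
    rcases henum i with rfl | rfl | rfl <;> rcases henum j with rfl | rfl | rfl <;>
      simp_all
  · intro i
    rcases henum i with rfl | rfl | rfl
    · have h01 : (0 : ZMod 3) + 1 = 1 := by decide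
      rw [h01]; simp_all
    · have h112 : (1 : ZMod 3) + 1 = 2 := by decide
      rw [h112]; simp_all
    · have h20 : (2 : ZMod 3) + 1 = 0 := by decide
      rw [h20]; simp_all

/-- block characterization purely in terms of the Share relation -/
lemma block_iff_share {B : Set V} :
    IsBlock G B ↔ B.Nonempty ∧ (∀ u ∈ B, ∀ v ∈ B, Share G u v) ∧
      (∀ x, (∀ u ∈ B, Share G x u) → x ∈ B) := by
  constructor
  · intro hB
    refine ⟨block_nonempty' hB, fun u hu v hv => ⟨B, hB, hu, hv⟩, fun x hx => ?_⟩
    have hpair : ∀ a ∈ insert x B, ∀ b ∈ insert x B, Share G a b := by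
      intro a ha b hb
      rcases Set.mem_insert_iff.1 ha with ha' | ha'
      · subst ha'
        rcases Set.mem_insert_iff.1 hb with hb' | hb'
        · subst hb'; exact share_refl _
        · exact hx b hb'
      · rcases Set.mem_insert_iff.1 hb with hb' | hb'
        · subst hb'; exact (hx a ha').symm
        · exact ⟨B, hB, ha', hb'⟩
    obtain ⟨D, hD, hsub⟩ := pairwise_share_sub_block ⟨x, Set.mem_insert x B⟩ hpair
    have hBD : B ⊆ D := fun z hz => hsub (Set.mem_insert_of_mem _ hz)
    have hBeq : B = D := hB.2 D hBD hD.1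
    rw [hBeq]
    exact hsub (Set.mem_insert x B)
  · rintro ⟨hne, hpair, hcl⟩
    obtain ⟨D, hD, hsub⟩ := pairwise_share_sub_block hne hpair
    have hDB : D ⊆ B := fun z hz => hcl z (fun u hu => ⟨D, hD, hz, hsub hu⟩)
    have hBeq : B = D := Set.Subset.antisymm hsub hDB
    exact hBeq ▸ hD

end BG

namespace BG
open SimpleGraph

variable {V : Type*} {G : SimpleGraph V} [Finite V]

lemma isCutVertex_iff {v : V} : IsCutVertex G v ↔
    ∃ a b : V, a ≠ v ∧ b ≠ v ∧ G.Reachable a b ∧ ¬ RIn G {x | x ≠ v} a b := by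
  constructor
  · rintro ⟨a, b, hr, hnr⟩
    refine ⟨a.1, b.1, a.2, b.2, hr, fun hR => hnr ?_⟩
    exact (rIn_iff_reachable_induce (S := {u : V | u ≠ v}) a.2 b.2).1 hR
  · rintro ⟨a, b, ha, hb, hr, hnr⟩
    exact ⟨⟨a, ha⟩, ⟨b, hb⟩, hr, fun hR => hnr (rIn_of_reachable_induce hR)⟩

omit [Finite V] in
lemma walk_head_destruct {a b : V} (p : G.Walk a b) (hp : p.IsPath) (hne : a ≠ b) :
    ∃ (x : V) (_ : G.Adj a x) (q : G.Walk x b),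
      (∀ z ∈ q.support, z ∈ p.support) ∧ a ∉ q.support := by
  obtain ⟨x, h, q, hq⟩ := SimpleGraph.Walk.not_nil_iff.1 (SimpleGraph.Walk.not_nil_of_ne (p := p) hne)
  have hsup : p.support = a :: q.support := by
    rw [hq, SimpleGraph.Walk.support_cons]
  have hnd := hp.support_nodup
  rw [hsup] at hnd
  exact ⟨x, h, q, fun z hz => by rw [hsup]; exact List.mem_cons_of_mem _ hz,
    (List.nodup_cons.1 hnd).1⟩

lemma share_iff_forall_avoid (hconn : G.Connected) {u v : V} (huv : u ≠ v) :
    Share G u v ↔ ∀ w, w ≠ u → w ≠ v → RIn G {x | x ≠ w} u v := by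
  constructor
  · rintro ⟨B, hB, hu, hv⟩ w hwu hwv
    have h1 : u ∈ B \ {w} := ⟨hu, fun h => hwu (Set.eq_of_mem_singleton h).symm⟩
    have h2 : v ∈ B \ {w} := ⟨hv, fun h => hwv (Set.eq_of_mem_singleton h).symm⟩
    exact (block_rIn_remove hB w h1 h2).mono (fun z hz => hz.2)
  · intro h
    by_cases hadj : G.Adj u v
    · exact share_of_adj hadj
    have hpath : ∀ w : V, w ≠ u → w ≠ v →
        ∃ p : G.Walk u v, p.IsPath ∧ ∀ x ∈ p.support, x ≠ w := by
      intro w h1 h2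
      obtain ⟨p, hp1, hp2⟩ := (h w h1 h2).exists_path
      exact ⟨p, hp1, fun x hx => hp2 x hx⟩
    choose p hp1 hp2 using hpath
    -- there is an internal vertex
    obtain ⟨q0⟩ := hconn.preconnected u v
    obtain ⟨z, hzadj, q', -, -⟩ := walk_head_destruct q0.bypass q0.bypass_isPath huv
    have hz1 : z ≠ u := hzadj.ne'
    have hz2 : z ≠ v := fun hzv => hadj (hzv ▸ hzadj)
    set S : Set V := {u, v} ∪ {x | ∃ (w : V) (h1 : w ≠ u) (h2 : w ≠ v),
      x ∈ (p w h1 h2).support} with hS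
    have huS : u ∈ S := Or.inl (Or.inl rfl)
    have hvS : v ∈ S := Or.inl (Or.inr rfl)
    have hsupS : ∀ (w : V) (h1 : w ≠ u) (h2 : w ≠ v) (x : V),
        x ∈ (p w h1 h2).support → x ∈ S := by
      intro w h1 h2 x hx
      exact Or.inr ⟨w, h1, h2, hx⟩
    have huvS : RIn G S u v := ⟨p z hz1 hz2, fun x hx => hsupS z hz1 hz2 x hx⟩
    have hx_to_u : ∀ (w : V) (h1 : w ≠ u) (h2 : w ≠ v) (x : V)
        (hx : x ∈ (p w h1 h2).support), RIn G S x u := by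
      intro w h1 h2 x hx
      refine ⟨((p w h1 h2).takeUntil x hx).reverse, fun z' hz' => ?_⟩
      rw [SimpleGraph.Walk.support_reverse] at hz'
      exact hsupS w h1 h2 z'
        ((p w h1 h2).support_takeUntil_subset hx (List.mem_reverse.1 hz'))
    have hconnS : ∀ x ∈ S, RIn G S x u := by
      intro x hx
      rcases hx with (rfl | rfl) | hx
      · exact RIn.refl huS
      · exact huvS.symm
      · obtain ⟨w, h1, h2, hw⟩ := hx
        exact hx_to_u w h1 h2 x hw
    -- removal
    have hrem : ∀ c ∈ S, ∀ x ∈ S \ {c}, ∀ y ∈ S \ {c}, RIn G (S \ {c}) x y := by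
      intro c hc x hx y hy
      by_cases hcu : c = u
      · subst hcu
        have key : ∀ x' ∈ S \ {c}, RIn G (S \ {c}) x' v := by
          intro x' hx'
          have hx'c : x' ≠ c := hx'.2
          rcases hx'.1 with (rfl | rfl) | hmem
          · exact absurd rfl hx'c
          · exact RIn.refl hx'
          · obtain ⟨w, h1, h2, hw⟩ := hmem
            rcases split_avoid (p w h1 h2) (hp1 w h1 h2) hw (fun h' => hx'c h'.symm) with
              ⟨q, hqsub, hqav⟩ | ⟨q, hqsub, hqav⟩
            · exact absurd q.end_mem_support hqav
            · exact ⟨q, fun z' hz' => ⟨hsupS w h1 h2 z' (hqsub z' hz'),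
                fun hz'' => hqav (hz'' ▸ hz')⟩⟩
        exact (key x hx).trans (key y hy).symm
      by_cases hcv : c = v
      · subst hcv
        have key : ∀ x' ∈ S \ {c}, RIn G (S \ {c}) x' u := by
          intro x' hx'
          have hx'c : x' ≠ c := hx'.2
          rcases hx'.1 with (rfl | rfl) | hmem
          · exact RIn.refl hx'
          · exact absurd rfl hx'c
          · obtain ⟨w, h1, h2, hw⟩ := hmem
            rcases split_avoid (p w h1 h2) (hp1 w h1 h2) hw (fun h' => hx'c h'.symm) with
              ⟨q, hqsub, hqav⟩ | ⟨q, hqsub, hqav⟩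
            · exact ⟨q, fun z' hz' => ⟨hsupS w h1 h2 z' (hqsub z' hz'),
                fun hz'' => hqav (hz'' ▸ hz')⟩⟩
            · exact absurd q.end_mem_support hqav
        exact (key x hx).trans (key y hy).symm
      · have huc : u ∈ S \ {c} := ⟨huS, fun h' => hcu (Set.eq_of_mem_singleton h').symm⟩
        have hvc : v ∈ S \ {c} := ⟨hvS, fun h' => hcv (Set.eq_of_mem_singleton h').symm⟩
        have hu_v : RIn G (S \ {c}) u v := by
          refine ⟨p c hcu hcv, fun z' hz' => ⟨hsupS c hcu hcv z' hz', fun h' => ?_⟩⟩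
          exact hp2 c hcu hcv z' hz' (Set.eq_of_mem_singleton h')
        have key : ∀ x' ∈ S \ {c}, RIn G (S \ {c}) x' u := by
          intro x' hx'
          have hx'c : x' ≠ c := hx'.2
          rcases hx'.1 with (rfl | rfl) | hmem
          · exact RIn.refl huc
          · exact hu_v.symm
          · obtain ⟨w, h1, h2, hw⟩ := hmem
            rcases split_avoid (p w h1 h2) (hp1 w h1 h2) hw (fun h' => hx'c h'.symm) with
              ⟨q, hqsub, hqav⟩ | ⟨q, hqsub, hqav⟩
            · exact ⟨q, fun z' hz' => ⟨hsupS w h1 h2 z' (hqsub z' hz'),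
                fun hz'' => hqav (hz'' ▸ hz')⟩⟩
            · have hxv : RIn G (S \ {c}) x' v :=
                ⟨q, fun z' hz' => ⟨hsupS w h1 h2 z' (hqsub z' hz'),
                  fun hz'' => hqav (hz'' ▸ hz')⟩⟩
              exact hxv.trans hu_v.symm
        exact (key x hx).trans (key y hy).symm
    have hbic : IsBiconn G S := by
      rw [isBiconn_iff]
      exact ⟨⟨u, huS⟩, fun x hx y hy => (hconnS x hx).trans (hconnS y hy).symm, hrem⟩
    obtain ⟨B, hsub, hB⟩ := exists_block_superset hbic
    exact ⟨B, hB, hsub huS, hsub hvS⟩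

end BG

namespace BG
open SimpleGraph

variable {V : Type*} {G : SimpleGraph V} [Finite V]

lemma cut_of_two_blocks (hconn : G.Connected) {v : V} {B B' : Set V}
    (hB : IsBlock G B) (hB' : IsBlock G B') (hne : B ≠ B') (hv : v ∈ B) (hv' : v ∈ B') :
    IsCutVertex G v := by
  have hexB : ∃ a ∈ B, a ≠ v := by
    by_contra hc; push_neg at hc
    have hsub : B ⊆ B' := fun x hx => (hc x hx) ▸ hv'
    exact hne (hB.2 B' hsub hB'.1)
  have hexB' : ∃ b ∈ B', b ≠ v := by
    by_contra hc; push_neg at hc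
    have hsub : B' ⊆ B := fun x hx => (hc x hx) ▸ hv
    exact hne ((hB'.2 B hsub hB.1).symm)
  obtain ⟨a, haB, hav⟩ := hexB
  obtain ⟨b, hbB', hbv⟩ := hexB'
  have hinter : ∀ x, x ∈ B → x ∈ B' → x = v := by
    intro x hx hx'
    by_contra hxv
    exact hne (blocks_inter_eq hB hB' ⟨hx, hx'⟩ ⟨hv, hv'⟩ hxv)
  have hab : a ≠ b := fun h => hav (hinter a haB (h ▸ hbB'))
  have hbnB : b ∉ B := fun h => hbv (hinter b h hbB')
  rw [isCutVertex_iff]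
  refine ⟨a, b, hav, hbv, hconn.preconnected a b, fun hR => ?_⟩
  obtain ⟨q, hq1, hq2⟩ := hR.exists_path
  have hq2' : ∀ x ∈ q.support, x ≠ v := fun x hx => hq2 x hx
  set S : Set V := (B ∪ B') ∪ {x | x ∈ q.support} with hSdef
  have hBS : B ⊆ S := fun x hx => Or.inl (Or.inl hx)
  have hB'S : B' ⊆ S := fun x hx => Or.inl (Or.inr hx)
  have hqS : ∀ x ∈ q.support, x ∈ S := fun x hx => Or.inr hx
  have hvS : v ∈ S := hBS hv
  have hconnS : ∀ x ∈ S, RIn G S x v := by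
    intro x hx
    rcases hx with (hx | hx) | hx
    · exact (block_rIn hB hx hv).mono hBS
    · exact (block_rIn hB' hx hv').mono hB'S
    · have hxa : RIn G S x a := by
        refine ⟨(q.takeUntil x hx).reverse, fun z hz => ?_⟩
        rw [SimpleGraph.Walk.support_reverse] at hz
        exact hqS z (q.support_takeUntil_subset hx (List.mem_reverse.1 hz))
      exact hxa.trans ((block_rIn hB haB hv).mono hBS)
  have hrem : ∀ c ∈ S, ∀ x ∈ S \ {c}, ∀ y ∈ S \ {c}, RIn G (S \ {c}) x y := by
    intro c hc x hx y hy
    by_cases hcv : c = v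
    · subst hcv
      have haS : a ∈ S \ {c} := ⟨hBS haB, hav⟩
      have hbS : b ∈ S \ {c} := ⟨hB'S hbB', hbv⟩
      have hba : RIn G (S \ {c}) b a := by
        have h1 : RIn G (S \ {c}) a b :=
          ⟨q, fun z hz => ⟨hqS z hz, hq2' z hz⟩⟩
        exact h1.symm
      have hBd : B \ {c} ⊆ S \ {c} := fun z hz => ⟨hBS hz.1, hz.2⟩
      have hB'd : B' \ {c} ⊆ S \ {c} := fun z hz => ⟨hB'S hz.1, hz.2⟩
      have key : ∀ x' ∈ S \ {c}, RIn G (S \ {c}) x' a := by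
        intro x' hx'
        rcases hx'.1 with (hm | hm) | hm
        · exact (block_rIn_remove hB c ⟨hm, hx'.2⟩ ⟨haB, hav⟩).mono
            hBd
        · exact ((block_rIn_remove hB' c ⟨hm, hx'.2⟩ ⟨hbB', hbv⟩).mono
            hB'd).trans hba
        · refine RIn.trans ⟨(q.takeUntil x' hm).reverse, fun z hz => ?_⟩ (RIn.refl haS)
          rw [SimpleGraph.Walk.support_reverse] at hz
          have hz' := q.support_takeUntil_subset hm (List.mem_reverse.1 hz)
          exact ⟨hqS z hz', hq2' z hz'⟩
      exact (key x hx).trans (key y hy).symm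
    · have hvc : v ∈ S \ {c} := ⟨hvS, fun h => hcv (Set.eq_of_mem_singleton h).symm⟩
      have hBd : B \ {c} ⊆ S \ {c} := fun z hz => ⟨hBS hz.1, hz.2⟩
      have hB'd : B' \ {c} ⊆ S \ {c} := fun z hz => ⟨hB'S hz.1, hz.2⟩
      have key : ∀ x' ∈ S \ {c}, RIn G (S \ {c}) x' v := by
        intro x' hx'
        rcases hx'.1 with (hm | hm) | hm
        · exact (block_rIn_remove hB c ⟨hm, hx'.2⟩ ⟨hv, hvc.2⟩).mono
            hBd
        · exact (block_rIn_remove hB' c ⟨hm, hx'.2⟩ ⟨hv', hvc.2⟩).mono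
            hB'd
        · rcases split_avoid q hq1 hm (fun h => hx'.2 h.symm) with
            ⟨q', hq'sub, hq'av⟩ | ⟨q', hq'sub, hq'av⟩
          · have h1 : RIn G (S \ {c}) x' a :=
              ⟨q', fun z hz => ⟨hqS z (hq'sub z hz), fun h => hq'av (h ▸ hz)⟩⟩
            have hac : a ≠ c := fun h => hq'av (h ▸ q'.end_mem_support)
            exact h1.trans ((block_rIn_remove hB c ⟨haB, hac⟩ ⟨hv, hvc.2⟩).mono
              hBd)
          · have h1 : RIn G (S \ {c}) x' b :=
              ⟨q', fun z hz => ⟨hqS z (hq'sub z hz), fun h => hq'av (h ▸ hz)⟩⟩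
            have hbc : b ≠ c := fun h => hq'av (h ▸ q'.end_mem_support)
            exact h1.trans ((block_rIn_remove hB' c ⟨hbB', hbc⟩ ⟨hv', hvc.2⟩).mono
              hB'd)
      exact (key x hx).trans (key y hy).symm
  have hbic : IsBiconn G S := by
    rw [isBiconn_iff]
    exact ⟨⟨v, hvS⟩, fun x hx y hy => (hconnS x hx).trans (hconnS y hy).symm, hrem⟩
  have : B = S := hB.2 S hBS hbic
  exact hbnB (this ▸ hB'S hbB')

lemma cutVertex_iff_blocks (hconn : G.Connected) {v : V} :
    IsCutVertex G v ↔
      ∃ B B', IsBlock G B ∧ IsBlock G B' ∧ B ≠ B' ∧ v ∈ B ∧ v ∈ B' := by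
  constructor
  · intro hcut
    obtain ⟨a, b, hav, hbv, hr, hnr⟩ := isCutVertex_iff.1 hcut
    obtain ⟨q0⟩ := hr
    set p1 := q0.bypass with hp1def
    have hp1 : p1.IsPath := q0.bypass_isPath
    have hvmem : v ∈ p1.support := by
      by_contra hvm
      exact hnr ⟨p1, fun x hx => fun hxv => hvm (hxv ▸ hx)⟩
    -- first half
    have hq1path : (p1.takeUntil v hvmem).IsPath := hp1.takeUntil hvmem
    have hr1path : (p1.takeUntil v hvmem).reverse.IsPath := hq1path.reverse
    obtain ⟨x, hvx, t, htsub, hvt⟩ :=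
      walk_head_destruct (p1.takeUntil v hvmem).reverse hr1path (fun h => hav h.symm)
    -- second half
    have hq2path : (p1.dropUntil v hvmem).IsPath := hp1.dropUntil hvmem
    obtain ⟨y, hvy, t', ht'sub, hvt'⟩ :=
      walk_head_destruct (p1.dropUntil v hvmem) hq2path (fun h => hbv h.symm)
    obtain ⟨B1, hsub1, hB1⟩ := exists_block_superset (biconn_pair hvx)
    obtain ⟨B2, hsub2, hB2⟩ := exists_block_superset (biconn_pair hvy)
    by_cases hBB : B1 = B2
    · exfalso
      subst hBB
      have hxB : x ∈ B1 \ {v} := ⟨hsub1 (Or.inr rfl), hvx.ne'⟩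
      have hyB : y ∈ B1 \ {v} := ⟨hsub2 (Or.inr rfl), hvy.ne'⟩
      have rxy : RIn G {z | z ≠ v} x y :=
        (block_rIn_remove hB1 v hxB hyB).mono (fun z hz => hz.2)
      have rxa : RIn G {z | z ≠ v} x a :=
        ⟨t, fun z hz => fun hzv => hvt (hzv ▸ hz)⟩
      have ryb : RIn G {z | z ≠ v} y b :=
        ⟨t', fun z hz => fun hzv => hvt' (hzv ▸ hz)⟩
      exact hnr ((rxa.symm.trans rxy).trans ryb)
    · exact ⟨B1, B2, hB1, hB2, hBB, hsub1 (Or.inl rfl), hsub2 (Or.inl rfl)⟩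
  · rintro ⟨B, B', hB, hB', hne, hv, hv'⟩
    exact cut_of_two_blocks hconn hB hB' hne hv hv'

lemma noncut_unique_block (hconn : G.Connected) {v : V} (hnc : ¬ IsCutVertex G v)
    {B B' : Set V} (hB : IsBlock G B) (hB' : IsBlock G B') (hv : v ∈ B) (hv' : v ∈ B') :
    B = B' := by
  by_contra hne
  exact hnc (cut_of_two_blocks hconn hB hB' hne hv hv')

lemma adj_iff_share (hbg : IsBlockGraph G) {u v : V} :
    G.Adj u v ↔ u ≠ v ∧ Share G u v := by
  constructor
  · exact fun h => ⟨h.ne, share_of_adj h⟩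
  · rintro ⟨hne, B, hB, hu, hv⟩
    exact hbg B hB u hu v hv hne

end BG

namespace BG
open SimpleGraph

variable {V : Type*} {G : SimpleGraph V} [Finite V]

lemma zmod_val_add_one {m : ℕ} (hm : 2 ≤ m) (i : ZMod m) :
    (i + 1).val = if i.val = m - 1 then 0 else i.val + 1 := by
  haveI : NeZero m := ⟨by omega⟩
  haveI : Fact (1 < m) := ⟨by omega⟩
  rw [ZMod.val_add, ZMod.val_one]
  have hlt : i.val < m := ZMod.val_lt i
  by_cases h : i.val = m - 1
  · rw [if_pos h, h, show m - 1 + 1 = m by omega, Nat.mod_self]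
  · rw [if_neg h]
    exact Nat.mod_eq_of_lt (by omega)

/-- generic ring extraction from a linear chain with a closing link -/
lemma chain_ring (C : ℕ → Set V) (u : ℕ → V) (s m : ℕ) (hm : 2 ≤ m) (w : V)
    (hCb : ∀ t, t < m → IsBlock G (C (s + t)))
    (hCinj : ∀ a b, a < m → b < m → C (s + a) = C (s + b) → a = b)
    (hlink : ∀ t, t + 1 < m → u (s + t) ∈ C (s + t) ∧ u (s + t) ∈ C (s + t + 1))
    (hw1 : w ∈ C (s + (m - 1))) (hw2 : w ∈ C s)
    (huinj : ∀ a b, a + 1 < m → b + 1 < m → u (s + a) = u (s + b) → a = b)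
    (hwu : ∀ t, t + 1 < m → w ≠ u (s + t)) : False := by
  haveI : NeZero m := ⟨by omega⟩
  refine ring_lemma (G := G) hm (fun z => C (s + z.val))
    (fun z => if z.val = m - 1 then w else u (s + z.val)) ?_ ?_ ?_ ?_
  · intro i
    exact hCb i.val (ZMod.val_lt i)
  · intro i j hij
    exact ZMod.val_injective m (hCinj i.val j.val (ZMod.val_lt i) (ZMod.val_lt j) hij)
  · intro i j hij
    dsimp only at hij
    by_cases hi : i.val = m - 1 <;> by_cases hj : j.val = m - 1
    · exact ZMod.val_injective m (by rw [hi, hj])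
    · rw [if_pos hi, if_neg hj] at hij
      exact absurd hij (hwu j.val (by have := ZMod.val_lt j; omega))
    · rw [if_neg hi, if_pos hj] at hij
      exact absurd hij.symm (hwu i.val (by have := ZMod.val_lt i; omega))
    · rw [if_neg hi, if_neg hj] at hij
      exact ZMod.val_injective m (huinj i.val j.val
        (by have := ZMod.val_lt i; omega) (by have := ZMod.val_lt j; omega) hij)
  · intro i
    have hval := zmod_val_add_one hm i
    by_cases hi : i.val = m - 1
    · rw [if_pos hi]
      constructor
      · rw [hi]
        exact hw1
      · rw [hval, if_pos hi]
        simpa using hw2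
    · rw [if_neg hi]
      have hlt : i.val + 1 < m := by have := ZMod.val_lt i; omega
      constructor
      · exact (hlink i.val hlt).1
      · rw [hval, if_neg hi]
        have := (hlink i.val hlt).2
        rwa [show s + i.val + 1 = s + (i.val + 1) by omega] at this
end BG

namespace BG
open SimpleGraph

variable {V : Type*} {G : SimpleGraph V} [Finite V]

lemma no_all_blocks_two_cuts (hconn : G.Connected)
    (hb : ∀ B, IsBlock G B → ∃ w1 w2, IsCutVertex G w1 ∧ IsCutVertex G w2 ∧
      w1 ≠ w2 ∧ w1 ∈ B ∧ w2 ∈ B) : False := by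
  classical
  have hP : ∀ k : ℕ, ∃ (C : ℕ → Set V) (u : ℕ → V),
      (∀ i, i ≤ k → IsBlock G (C i)) ∧
      (∀ i, i < k → u i ∈ C i ∧ u i ∈ C (i+1) ∧ IsCutVertex G (u i)) ∧
      (∀ i j, i < j → j ≤ k → C i ≠ C j) ∧
      (∀ i j, i < j → j < k → u i ≠ u j) := by
    intro k
    induction k with
    | zero =>
        obtain ⟨v0⟩ := hconn.nonempty
        obtain ⟨B0, hB0, -⟩ := exists_block_mem (G := G) v0
        exact ⟨fun _ => B0, fun _ => v0, fun i _ => hB0,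
          fun i hi => absurd hi (Nat.not_lt_zero i),
          fun i j hij hj => absurd (lt_of_lt_of_le hij hj) (Nat.not_lt_zero i),
          fun i j hij hj => absurd hj (Nat.not_lt_zero j)⟩
    | succ k ih =>
        obtain ⟨C, u, h1, h2, h3, h4⟩ := ih
        obtain ⟨w1, w2, hc1, hc2, h12, hm1, hm2⟩ := hb (C k) (h1 k le_rfl)
        have hwex : ∃ w, IsCutVertex G w ∧ w ∈ C k ∧ ∀ j, j + 1 = k → w ≠ u j := by
          by_cases hcase : ∃ j, j + 1 = k ∧ w1 = u j
          · obtain ⟨j, hjk, hj⟩ := hcase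
            refine ⟨w2, hc2, hm2, fun j' hj' hwe => ?_⟩
            have : j' = j := by omega
            subst this
            exact h12 (hj.trans hwe.symm)
          · push_neg at hcase
            exact ⟨w1, hc1, hm1, fun j hj => hcase j hj⟩
        obtain ⟨w, hwc, hwk, hwprev⟩ := hwex
        by_cases hwold : ∃ j, j < k ∧ w = u j
        · exfalso
          obtain ⟨j, hjk, hwj⟩ := hwold
          have hjk1 : j + 1 < k := by
            rcases Nat.lt_or_ge (j+1) k with h | h
            · exact h
            · have : j + 1 = k := by omega
              exact absurd hwj (hwprev j this)
          refine chain_ring (G := G) C u (j+1) (k - j) (by omega) w ?_ ?_ ?_ ?_ ?_ ?_ ?_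
          · intro t ht
            exact h1 (j+1+t) (by omega)
          · intro a b ha hb' he
            by_contra hne
            rcases lt_trichotomy a b with h | h | h
            · exact h3 (j+1+a) (j+1+b) (by omega) (by omega) he
            · exact hne h
            · exact h3 (j+1+b) (j+1+a) (by omega) (by omega) he.symm
          · intro t ht
            exact ⟨(h2 (j+1+t) (by omega)).1, (h2 (j+1+t) (by omega)).2.1⟩
          · rw [show j+1+(k-j-1) = k by omega]
            exact hwk
          · rw [hwj]
            exact (h2 j hjk).2.1
          · intro a b ha hb' he
            by_contra hne
            rcases lt_trichotomy a b with h | h | h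
            · exact h4 (j+1+a) (j+1+b) (by omega) (by omega) he
            · exact hne h
            · exact h4 (j+1+b) (j+1+a) (by omega) (by omega) he.symm
          · intro t ht
            rw [hwj]
            exact h4 j (j+1+t) (by omega) (by omega)
        · push_neg at hwold
          obtain ⟨D1, D2, hD1, hD2, hDD, hwD1, hwD2⟩ := (cutVertex_iff_blocks hconn).1 hwc
          have hDex : ∃ D, IsBlock G D ∧ w ∈ D ∧ D ≠ C k := by
            by_cases h : D1 = C k
            · refine ⟨D2, hD2, hwD2, fun hE => hDD (h.trans hE.symm)⟩
            · exact ⟨D1, hD1, hwD1, h⟩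
          obtain ⟨D, hD, hwD, hDk⟩ := hDex
          by_cases hDold : ∃ i, i ≤ k ∧ D = C i
          · exfalso
            obtain ⟨i, hik, hDi⟩ := hDold
            have hik' : i < k := by
              rcases Nat.lt_or_ge i k with h | h
              · exact h
              · have : i = k := by omega
                exact absurd (this ▸ hDi) hDk
            refine chain_ring (G := G) C u i (k - i + 1) (by omega) w ?_ ?_ ?_ ?_ ?_ ?_ ?_
            · intro t ht
              exact h1 (i+t) (by omega)
            · intro a b ha hb' he
              by_contra hne
              rcases lt_trichotomy a b with h | h | h
              · exact h3 (i+a) (i+b) (by omega) (by omega) he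
              · exact hne h
              · exact h3 (i+b) (i+a) (by omega) (by omega) he.symm
            · intro t ht
              exact ⟨(h2 (i+t) (by omega)).1, (h2 (i+t) (by omega)).2.1⟩
            · rw [show i+(k-i+1-1) = k by omega]
              exact hwk
            · exact hDi ▸ hwD
            · intro a b ha hb' he
              by_contra hne
              rcases lt_trichotomy a b with h | h | h
              · exact h4 (i+a) (i+b) (by omega) (by omega) he
              · exact hne h
              · exact h4 (i+b) (i+a) (by omega) (by omega) he.symm
            · intro t ht
              exact hwold (i+t) (by omega)
          · push_neg at hDold
            refine ⟨fun t => if t = k+1 then D else C t,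
              fun t => if t = k then w else u t, ?_, ?_, ?_, ?_⟩
            · intro i hi
              dsimp only
              by_cases h : i = k+1
              · rw [if_pos h]; exact hD
              · rw [if_neg h]; exact h1 i (by omega)
            · intro i hi
              dsimp only
              by_cases h : i = k
              · rw [if_pos h, h]
                refine ⟨?_, ?_, hwc⟩
                · rw [if_neg (by omega : ¬ k = k+1)]
                  exact hwk
                · rw [if_pos rfl]
                  exact hwD
              · rw [if_neg h]
                have hik : i < k := by omega
                refine ⟨?_, ?_, (h2 i hik).2.2⟩
                · rw [if_neg (by omega : ¬ i = k+1)]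
                  exact (h2 i hik).1
                · rw [if_neg (by omega : ¬ i + 1 = k+1)]
                  exact (h2 i hik).2.1
            · intro i j hij hj
              dsimp only
              by_cases h : j = k+1
              · rw [if_pos h, if_neg (by omega : ¬ i = k+1)]
                exact fun he => (hDold i (by omega)) he.symm
              · rw [if_neg h, if_neg (by omega : ¬ i = k+1)]
                exact h3 i j hij (by omega)
            · intro i j hij hj
              dsimp only
              by_cases h : j = k
              · rw [if_pos h, if_neg (by omega : ¬ i = k)]
                exact fun he => hwold i (by omega) he.symm
              · rw [if_neg h, if_neg (by omega : ¬ i = k)]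
                exact h4 i j hij (by omega)
  obtain ⟨C, u, h1, -, h3, -⟩ := hP (Nat.card (Set V))
  have hinj : Function.Injective (fun i : Fin (Nat.card (Set V) + 1) => C i.1) := by
    intro a b hab
    by_contra hne
    rcases lt_trichotomy (a : ℕ) (b : ℕ) with h | h | h
    · exact h3 a.1 b.1 h (by omega) hab
    · exact hne (Fin.ext h)
    · exact h3 b.1 a.1 h (by omega) hab.symm
  have hcard := Nat.card_le_card_of_injective _ hinj
  rw [Nat.card_eq_fintype_card, Fintype.card_fin] at hcard
  omega

end BG

namespace BG
open SimpleGraph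

variable {V : Type*} {G : SimpleGraph V} [Finite V]

lemma bt_adj_inl_inr {v : {v : V // IsCutVertex G v}} {B : {B : Set V // IsBlock G B}} :
    (blockTree G).Adj (Sum.inl v) (Sum.inr B) ↔ v.1 ∈ B.1 := by
  constructor
  · rintro (⟨v', B', h1, h2, h3⟩ | ⟨v', B', h1, h2, h3⟩)
    · replace h1 := Sum.inl_injective h1
      replace h2 := Sum.inr_injective h2
      rw [h1, h2]; exact h3
    · exact absurd h1 (by simp)
  · intro h
    exact Or.inl ⟨v, B, rfl, rfl, h⟩

lemma bt_adj_inr_inl {v : {v : V // IsCutVertex G v}} {B : {B : Set V // IsBlock G B}} :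
    (blockTree G).Adj (Sum.inr B) (Sum.inl v) ↔ v.1 ∈ B.1 :=
  ⟨fun h => bt_adj_inl_inr.1 h.symm, fun h => (bt_adj_inl_inr.2 h).symm⟩

lemma bt_adj_isLeft {x y : BTVert G} (h : (blockTree G).Adj x y) :
    x.isLeft = !y.isLeft := by
  rcases h with ⟨v, B, rfl, rfl, -⟩ | ⟨v, B, rfl, rfl, -⟩ <;> rfl

lemma bt_reach_same_vertex (hconn : G.Connected) (u : V)
    (B B' : {B : Set V // IsBlock G B}) (hu : u ∈ B.1) (hu' : u ∈ B'.1) :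
    (blockTree G).Reachable (Sum.inr B) (Sum.inr B') := by
  by_cases h : B = B'
  · exact h ▸ Reachable.refl _
  · have hcut : IsCutVertex G u :=
      cut_of_two_blocks hconn B.2 B'.2 (fun he => h (Subtype.ext he)) hu hu'
    exact ((bt_adj_inr_inl.2 hu).reachable).trans
      ((bt_adj_inl_inr (v := ⟨u, hcut⟩)).2 hu').reachable

lemma bt_reach_blocks (hconn : G.Connected) {u w : V} (p : G.Walk u w) :
    ∀ (B B' : {B : Set V // IsBlock G B}), u ∈ B.1 → w ∈ B'.1 →
      (blockTree G).Reachable (Sum.inr B) (Sum.inr B') := by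
  induction p with
  | nil =>
      intro B B' hu hw
      exact bt_reach_same_vertex hconn _ B B' hu hw
  | @cons a b c hadj q ih =>
      intro B B' hu hw
      obtain ⟨B1, hsub, hB1⟩ := exists_block_superset (biconn_pair hadj)
      exact (bt_reach_same_vertex hconn a B ⟨B1, hB1⟩ hu (hsub (Or.inl rfl))).trans
        (ih ⟨B1, hB1⟩ B' (hsub (Or.inr rfl)) hw)

lemma bt_to_block (x : BTVert G) :
    ∃ B : {B : Set V // IsBlock G B}, (blockTree G).Reachable x (Sum.inr B) ∧
      (x = Sum.inr B ∨ ∃ v, x = Sum.inl v ∧ v.1 ∈ B.1) := by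
  cases x with
  | inl v =>
      obtain ⟨B, hB, hv⟩ := exists_block_mem (G := G) v.1
      exact ⟨⟨B, hB⟩, (bt_adj_inl_inr.2 hv).reachable, Or.inr ⟨v, rfl, hv⟩⟩
  | inr B => exact ⟨B, Reachable.refl _, Or.inl rfl⟩

lemma bt_connected (hconn : G.Connected) (x y : BTVert G) :
    (blockTree G).Reachable x y := by
  obtain ⟨Bx, hrx, -⟩ := bt_to_block x
  obtain ⟨By, hry, -⟩ := bt_to_block y
  obtain ⟨u, hu⟩ := block_nonempty' Bx.2
  obtain ⟨w, hw⟩ := block_nonempty' By.2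
  obtain ⟨p⟩ := hconn.preconnected u w
  exact (hrx.trans (bt_reach_blocks hconn p Bx By hu hw)).trans hry.symm

end BG

namespace BG
open SimpleGraph

variable {V V' : Type*} [Finite V] [Finite V'] {G : SimpleGraph V} {G' : SimpleGraph V'}

lemma flip_propagate (e : BTVert G ≃ BTVert G')
    (he1 : ∀ x y, (blockTree G).Adj x y ↔ (blockTree G').Adj (e x) (e y))
    {x y : BTVert G} (p : (blockTree G).Walk x y)
    (hx : (e x).isLeft = !x.isLeft) : (e y).isLeft = !y.isLeft := by
  induction p with
  | nil => exact hx
  | @cons a b c hadj q ih =>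
      apply ih
      have h1 := bt_adj_isLeft hadj
      have h2 := bt_adj_isLeft ((he1 a b).1 hadj)
      cases hb : b.isLeft <;> cases heb : (e b).isLeft <;> simp_all

lemma side_preserved (hG : G.Connected) (hG' : G'.Connected)
    (e : BTVert G ≃ BTVert G')
    (he1 : ∀ x y, (blockTree G).Adj x y ↔ (blockTree G').Adj (e x) (e y)) :
    ∀ x, (e x).isLeft = x.isLeft := by
  by_contra hc
  push_neg at hc
  obtain ⟨x0, hx0⟩ := hc
  have hflip0 : (e x0).isLeft = !x0.isLeft := by
    cases h1 : (e x0).isLeft <;> cases h2 : x0.isLeft <;> simp_all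
  have hflip : ∀ y, (e y).isLeft = !y.isLeft := by
    intro y
    obtain ⟨p⟩ := bt_connected hG x0 y
    exact flip_propagate e he1 p hflip0
  have hb : ∀ B, IsBlock G' B → ∃ w1 w2, IsCutVertex G' w1 ∧ IsCutVertex G' w2 ∧
      w1 ≠ w2 ∧ w1 ∈ B ∧ w2 ∈ B := by
    intro B hB
    obtain ⟨v, hv⟩ : ∃ v : {v : V // IsCutVertex G v},
        e.symm (Sum.inr ⟨B, hB⟩) = Sum.inl v := by
      have h1 := hflip (e.symm (Sum.inr ⟨B, hB⟩))
      erw [e.apply_symm_apply] at h1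
      cases hy : e.symm (Sum.inr ⟨B, hB⟩) with
      | inl v => exact ⟨v, rfl⟩
      | inr b => rw [hy] at h1; simp at h1
    have hev : e (Sum.inl v) = Sum.inr ⟨B, hB⟩ := by
      erw [← hv, e.apply_symm_apply]
    obtain ⟨B1, B2, hB1, hB2, hBB, hv1, hv2⟩ := (cutVertex_iff_blocks hG).1 v.2
    have hex : ∀ (Bi : {B : Set V // IsBlock G B}),
        ∃ wi : {w : V' // IsCutVertex G' w}, e (Sum.inr Bi) = Sum.inl wi := by
      intro Bi
      have h1 := hflip (Sum.inr Bi)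
      cases he : e (Sum.inr Bi) with
      | inl w => exact ⟨w, rfl⟩
      | inr b => rw [he] at h1; simp at h1
    obtain ⟨w1, hw1⟩ := hex ⟨B1, hB1⟩
    obtain ⟨w2, hw2⟩ := hex ⟨B2, hB2⟩
    refine ⟨w1.1, w2.1, w1.2, w2.2, ?_, ?_, ?_⟩
    · intro hww
      apply hBB
      have heq : Sum.inl w1 = (Sum.inl w2 : BTVert G') := by rw [Subtype.ext hww]
      have h2 : e (Sum.inr ⟨B1, hB1⟩) = e (Sum.inr ⟨B2, hB2⟩) := by rw [hw1, hw2, heq]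
      have h3 := e.injective h2
      replace h3 := Sum.inr_injective h3
      exact congrArg Subtype.val h3
    · have h1 := (he1 (Sum.inl v) (Sum.inr ⟨B1, hB1⟩)).1 (bt_adj_inl_inr.2 hv1)
      rw [hev, hw1] at h1
      exact bt_adj_inr_inl.1 h1
    · have h1 := (he1 (Sum.inl v) (Sum.inr ⟨B2, hB2⟩)).1 (bt_adj_inl_inr.2 hv2)
      rw [hev, hw2] at h1
      exact bt_adj_inr_inl.1 h1
  exact no_all_blocks_two_cuts hG' hb

end BG

namespace BG
open SimpleGraph

variable {V V' : Type*} [Finite V] [Finite V'] {G : SimpleGraph V} {G' : SimpleGraph V'}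

lemma part2_iso (hG : G.Connected) (hbgG : IsBlockGraph G)
    (hG' : G'.Connected) (hbgG' : IsBlockGraph G') (hiso : BTIso G G') :
    ∃ e : V ≃ V', ∀ x y, G.Adj x y ↔ G'.Adj (e x) (e y) := by
  classical
  obtain ⟨e, he1, he2⟩ := hiso
  have hside := side_preserved hG hG' e he1
  have hside' : ∀ y, (e.symm y).isLeft = y.isLeft := by
    intro y
    have h := hside (e.symm y)
    rw [e.apply_symm_apply] at h
    exact h.symm
  have hInr : ∀ B : {B : Set V // IsBlock G B}, ∃ B', e (Sum.inr B) = Sum.inr B' := by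
    intro B
    have h := hside (Sum.inr B)
    cases he : e (Sum.inr B) with
    | inl w => rw [he] at h; simp at h
    | inr B' => exact ⟨B', rfl⟩
  have hInl : ∀ v : {v : V // IsCutVertex G v}, ∃ v', e (Sum.inl v) = Sum.inl v' := by
    intro v
    have h := hside (Sum.inl v)
    cases he : e (Sum.inl v) with
    | inl v' => exact ⟨v', rfl⟩
    | inr B' => rw [he] at h; simp at h
  have hInrS : ∀ B' : {B : Set V' // IsBlock G' B}, ∃ B, e.symm (Sum.inr B') = Sum.inr B := by
    intro B'
    have h := hside' (Sum.inr B')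
    cases he : e.symm (Sum.inr B') with
    | inl w => rw [he] at h; simp at h
    | inr B => exact ⟨B, rfl⟩
  have hInlS : ∀ v' : {v : V' // IsCutVertex G' v}, ∃ v, e.symm (Sum.inl v') = Sum.inl v := by
    intro v'
    have h := hside' (Sum.inl v')
    cases he : e.symm (Sum.inl v') with
    | inl v => exact ⟨v, rfl⟩
    | inr B => rw [he] at h; simp at h
  choose fInr hfInr using hInr
  choose fInl hfInl using hInl
  choose gInr hgInr using hInrS
  choose gInl hgInl using hInlS
  have hfg : ∀ B, gInr (fInr B) = B := by
    intro B
    have h1 := hgInr (fInr B)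
    erw [← hfInr B, e.symm_apply_apply] at h1
    exact (Sum.inr_injective h1).symm
  have hgf : ∀ B', fInr (gInr B') = B' := by
    intro B'
    have h1 := hfInr (gInr B')
    erw [← hgInr B', e.apply_symm_apply] at h1
    exact (Sum.inr_injective h1).symm
  have hfgl : ∀ v, gInl (fInl v) = v := by
    intro v
    have h1 := hgInl (fInl v)
    erw [← hfInl v, e.symm_apply_apply] at h1
    exact (Sum.inl_injective h1).symm
  have hgfl : ∀ v', fInl (gInl v') = v' := by
    intro v'
    have h1 := hfInl (gInl v')
    erw [← hgInl v', e.apply_symm_apply] at h1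
    exact (Sum.inl_injective h1).symm
  -- weights transfer
  have hwB : ∀ B, ((fInr B).1 \ {v | IsCutVertex G' v}).ncard
      = (B.1 \ {v | IsCutVertex G v}).ncard := by
    intro B
    have h := he2 (Sum.inr B)
    rw [hfInr B] at h
    exact h
  -- membership transfer
  have hmem : ∀ (v : {v : V // IsCutVertex G v}) (B), v.1 ∈ B.1 ↔ (fInl v).1 ∈ (fInr B).1 := by
    intro v B
    have h := he1 (Sum.inl v) (Sum.inr B)
    rw [hfInl v, hfInr B] at h
    constructor
    · intro hm
      exact bt_adj_inl_inr.1 (h.1 (bt_adj_inl_inr.2 hm))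
    · intro hm
      exact bt_adj_inl_inr.1 (h.2 (bt_adj_inl_inr.2 hm))
  -- block assignment for non-cut vertices
  have hbl0 : ∀ u : {v : V // ¬ IsCutVertex G v},
      ∃ B : {B : Set V // IsBlock G B}, u.1 ∈ B.1 := by
    intro u
    obtain ⟨B, hB, hm⟩ := exists_block_mem (G := G) u.1
    exact ⟨⟨B, hB⟩, hm⟩
  choose bl hbl using hbl0
  have huniq : ∀ (u) (B : {B : Set V // IsBlock G B}), u.1 ∈ B.1 → B = bl u := by
    intro u B hm
    exact Subtype.ext (noncut_unique_block hG u.2 B.2 (bl u).2 hm (hbl u))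
  have hbl0' : ∀ u : {v : V' // ¬ IsCutVertex G' v},
      ∃ B : {B : Set V' // IsBlock G' B}, u.1 ∈ B.1 := by
    intro u
    obtain ⟨B, hB, hm⟩ := exists_block_mem (G := G') u.1
    exact ⟨⟨B, hB⟩, hm⟩
  choose bl' hbl' using hbl0'
  have huniq' : ∀ (u) (B : {B : Set V' // IsBlock G' B}), u.1 ∈ B.1 → B = bl' u := by
    intro u B hm
    exact Subtype.ext (noncut_unique_block hG' u.2 B.2 (bl' u).2 hm (hbl' u))
  -- decompositions of noncut vertices into sigma over blocks
  let dec2 : {v : V // ¬ IsCutVertex G v} ≃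
      Σ B : {B : Set V // IsBlock G B}, ↥(B.1 \ {v | IsCutVertex G v}) :=
    { toFun := fun u => ⟨bl u, ⟨u.1, ⟨hbl u, u.2⟩⟩⟩
      invFun := fun x => ⟨x.2.1, x.2.2.2⟩
      left_inv := fun u => rfl
      right_inv := by
        rintro ⟨B, wv, hw1, hw2⟩
        have hBe : bl ⟨wv, hw2⟩ = B := (huniq ⟨wv, hw2⟩ B hw1).symm
        subst hBe
        exact congrArg (Sigma.mk _) (Subtype.ext rfl) }
  let dec2' : {v : V' // ¬ IsCutVertex G' v} ≃
      Σ B : {B : Set V' // IsBlock G' B}, ↥(B.1 \ {v | IsCutVertex G' v}) :=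
    { toFun := fun u => ⟨bl' u, ⟨u.1, ⟨hbl' u, u.2⟩⟩⟩
      invFun := fun x => ⟨x.2.1, x.2.2.2⟩
      left_inv := fun u => rfl
      right_inv := by
        rintro ⟨B, wv, hw1, hw2⟩
        have hBe : bl' ⟨wv, hw2⟩ = B := (huniq' ⟨wv, hw2⟩ B hw1).symm
        subst hBe
        exact congrArg (Sigma.mk _) (Subtype.ext rfl) }
  -- the block equivalence
  let eInr : {B : Set V // IsBlock G B} ≃ {B' : Set V' // IsBlock G' B'} :=
    ⟨fInr, gInr, hfg, hgf⟩
  let eInl : {v : V // IsCutVertex G v} ≃ {v' : V' // IsCutVertex G' v'} :=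
    ⟨fInl, gInl, hfgl, hgfl⟩
  -- fiber equivalences
  have fibn : ∀ B, Nonempty (↥(B.1 \ {v | IsCutVertex G v}) ≃
      ↥((fInr B).1 \ {v | IsCutVertex G' v})) := by
    intro B
    letI := Fintype.ofFinite ↥(B.1 \ {v | IsCutVertex G v})
    letI := Fintype.ofFinite ↥((fInr B).1 \ {v | IsCutVertex G' v})
    refine ⟨Fintype.equivOfCardEq ?_⟩
    rw [← Nat.card_eq_fintype_card, ← Nat.card_eq_fintype_card,
      Nat.card_coe_set_eq, Nat.card_coe_set_eq, hwB B]
  let fib : ∀ B, ↥(B.1 \ {v | IsCutVertex G v}) ≃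
      ↥((fInr B).1 \ {v | IsCutVertex G' v}) := fun B => (fibn B).some
  let mid := Equiv.sumCongr eInl
    (Equiv.sigmaCongr (β₁ := fun B : {B : Set V // IsBlock G B} => ↥(B.1 \ {v | IsCutVertex G v}))
      (β₂ := fun B' : {B' : Set V' // IsBlock G' B'} => ↥(B'.1 \ {v | IsCutVertex G' v}))
      eInr (fun B => fib B))
  let E : V ≃ V' :=
    ((Equiv.sumCompl (IsCutVertex G)).symm.trans
      ((Equiv.sumCongr (Equiv.refl _) dec2).trans
        (mid.trans
          ((Equiv.sumCongr (Equiv.refl _) dec2').symm.trans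
            (Equiv.sumCompl (IsCutVertex G'))))))
  -- computation lemmas
  have hEcut : ∀ (x : V) (hc : IsCutVertex G x), E x = (fInl ⟨x, hc⟩).1 := by
    intro x hc
    show ((Equiv.sumCompl (IsCutVertex G')))
        (((Equiv.sumCongr (Equiv.refl _) dec2').symm
          (mid ((Equiv.sumCongr (Equiv.refl _) dec2)
            ((Equiv.sumCompl (IsCutVertex G)).symm x))))) = _
    rw [Equiv.sumCompl_symm_apply_of_pos hc]
    simp [mid, Equiv.sumCongr_apply, eInl]
  have hEnc : ∀ (x : V) (hc : ¬ IsCutVertex G x),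
      E x = (fib (bl ⟨x, hc⟩) ⟨x, ⟨hbl ⟨x, hc⟩, hc⟩⟩).1 := by
    intro x hc
    show ((Equiv.sumCompl (IsCutVertex G')))
        (((Equiv.sumCongr (Equiv.refl _) dec2').symm
          (mid ((Equiv.sumCongr (Equiv.refl _) dec2)
            ((Equiv.sumCompl (IsCutVertex G)).symm x))))) = _
    rw [Equiv.sumCompl_symm_apply_of_neg hc]
    simp only [Equiv.sumCongr_apply, Sum.map_inr, Equiv.refl_apply]
    show (Equiv.sumCompl (IsCutVertex G'))
        ((Equiv.sumCongr (Equiv.refl _) dec2').symm (mid (Sum.inr (dec2 ⟨x, hc⟩)))) = _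
    simp only [mid, Equiv.sumCongr_apply, Sum.map_inr]
    rw [Equiv.sumCongr_symm, Equiv.sumCongr_apply]
    simp only [Sum.map_inr, Equiv.sumCompl_apply_inr]
    rfl
  -- key membership transfer along E
  have hKey : ∀ (x : V) (β : {B : Set V // IsBlock G B}),
      x ∈ β.1 ↔ E x ∈ (fInr β).1 := by
    intro x β
    by_cases hc : IsCutVertex G x
    · rw [hEcut x hc]
      exact hmem ⟨x, hc⟩ β
    · rw [hEnc x hc]
      have hfibm := (fib (bl ⟨x, hc⟩) ⟨x, ⟨hbl ⟨x, hc⟩, hc⟩⟩).2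
      constructor
      · intro hxβ
        have hβ : β = bl ⟨x, hc⟩ := huniq ⟨x, hc⟩ β hxβ
        rw [hβ]
        exact hfibm.1
      · intro hE
        have hnc' : ¬ IsCutVertex G' (fib (bl ⟨x, hc⟩) ⟨x, ⟨hbl ⟨x, hc⟩, hc⟩⟩).1 := hfibm.2
        have heq : (fInr β) = (fInr (bl ⟨x, hc⟩)) :=
          Subtype.ext (noncut_unique_block hG' hnc' (fInr β).2 (fInr (bl ⟨x, hc⟩)).2
            hE hfibm.1)
        have hβ : β = bl ⟨x, hc⟩ := by
          have h1 : gInr (fInr β) = gInr (fInr (bl ⟨x, hc⟩)) := by rw [heq]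
          rwa [hfg, hfg] at h1
        rw [hβ]
        exact hbl ⟨x, hc⟩
  refine ⟨E, fun x y => ?_⟩
  rw [adj_iff_share hbgG, adj_iff_share hbgG']
  constructor
  · rintro ⟨hne, B, hB, hx, hy⟩
    refine ⟨fun h => hne (E.injective h), (fInr ⟨B, hB⟩).1, (fInr ⟨B, hB⟩).2,
      (hKey x ⟨B, hB⟩).1 hx, (hKey y ⟨B, hB⟩).1 hy⟩
  · rintro ⟨hne, B', hB', hx, hy⟩
    refine ⟨fun h => hne (congrArg E h), (gInr ⟨B', hB'⟩).1, (gInr ⟨B', hB'⟩).2, ?_, ?_⟩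
    · refine (hKey x (gInr ⟨B', hB'⟩)).2 ?_
      rw [hgf]
      exact hx
    · refine (hKey y (gInr ⟨B', hB'⟩)).2 ?_
      rw [hgf]
      exact hy

end BG

namespace BG
open SimpleGraph

variable {V : Type*} [Finite V]

/-- completion of each block of `H` to a clique -/
def compG (H : SimpleGraph V) : SimpleGraph V where
  Adj u v := u ≠ v ∧ Share H u v
  symm := ⟨fun u v h => ⟨Ne.symm h.1, h.2.symm⟩⟩
  loopless := ⟨fun u h => h.1 rfl⟩

variable {H : SimpleGraph V}

lemma bt_not_inl_inl {G : SimpleGraph V} {v w : {v : V // IsCutVertex G v}} :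
    ¬ (blockTree G).Adj (Sum.inl v) (Sum.inl w) := by
  rintro (⟨a, b, h1, h2, h3⟩ | ⟨a, b, h1, h2, h3⟩)
  · exact absurd h2 (by simp)
  · exact absurd h1 (by simp)

lemma bt_not_inr_inr {G : SimpleGraph V} {B B' : {B : Set V // IsBlock G B}} :
    ¬ (blockTree G).Adj (Sum.inr B) (Sum.inr B') := by
  rintro (⟨a, b, h1, h2, h3⟩ | ⟨a, b, h1, h2, h3⟩)
  · exact absurd h1 (by simp)
  · exact absurd h2 (by simp)

lemma rIn_comp_of_rIn {S : Set V} {u v : V} (h : RIn H S u v) :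
    RIn (compG H) S u v := by
  obtain ⟨p, hp⟩ := h
  induction p with
  | nil => exact RIn.refl (hp _ (SimpleGraph.Walk.start_mem_support _))
  | @cons a b c hadj q ih =>
      have ha : a ∈ S := hp a (by simp [SimpleGraph.Walk.support_cons])
      have hb : b ∈ S := hp b (by simp [SimpleGraph.Walk.support_cons])
      refine (RIn.of_adj (G := compG H) (show (compG H).Adj a b from ⟨hadj.ne, share_of_adj hadj⟩) ha hb).trans
        (ih (fun z hz => hp z (by simp [SimpleGraph.Walk.support_cons, hz])))

lemma rIn_of_comp_avoid {w u v : V} (h : RIn (compG H) {x | x ≠ w} u v) :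
    RIn H {x | x ≠ w} u v := by
  obtain ⟨p, hp⟩ := h
  induction p with
  | nil => exact RIn.refl (hp _ (SimpleGraph.Walk.start_mem_support _))
  | @cons a b c hadj q ih =>
      have ha : a ≠ w := hp a (by simp [SimpleGraph.Walk.support_cons])
      have hb : b ≠ w := hp b (by simp [SimpleGraph.Walk.support_cons])
      obtain ⟨hne, D, hD, haD, hbD⟩ := id hadj
      have h1 : RIn H {x | x ≠ w} a b :=
        (block_rIn_remove hD w ⟨haD, fun hh => ha hh⟩ ⟨hbD, fun hh => hb hh⟩).mono
          (fun z hz => hz.2)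
      exact h1.trans (ih (fun z hz => hp z (by simp [SimpleGraph.Walk.support_cons, hz])))

lemma rIn_of_comp_univ {u v : V} (h : RIn (compG H) Set.univ u v) :
    RIn H Set.univ u v := by
  obtain ⟨p, hp⟩ := h
  induction p with
  | nil => exact RIn.refl trivial
  | @cons a b c hadj q ih =>
      obtain ⟨hne, D, hD, haD, hbD⟩ := hadj
      have h1 : RIn H Set.univ a b := (block_rIn hD haD hbD).mono (fun z _ => trivial)
      exact h1.trans (ih (fun z hz => trivial))

lemma comp_reachable_iff {u v : V} :
    (compG H).Reachable u v ↔ H.Reachable u v := by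
  rw [← rIn_univ_iff_reachable, ← rIn_univ_iff_reachable]
  exact ⟨rIn_of_comp_univ, rIn_comp_of_rIn⟩

lemma comp_connected (hH : H.Connected) : (compG H).Connected := by
  haveI : Nonempty V := hH.nonempty
  rw [SimpleGraph.connected_iff]
  exact ⟨fun u v => comp_reachable_iff.2 (hH.preconnected u v), inferInstance⟩

lemma comp_cut_iff (hH : H.Connected) {v : V} :
    IsCutVertex (compG H) v ↔ IsCutVertex H v := by
  rw [isCutVertex_iff, isCutVertex_iff]
  constructor
  · rintro ⟨a, b, ha, hb, hr, hnr⟩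
    exact ⟨a, b, ha, hb, comp_reachable_iff.1 hr, fun hc => hnr (rIn_comp_of_rIn hc)⟩
  · rintro ⟨a, b, ha, hb, hr, hnr⟩
    exact ⟨a, b, ha, hb, comp_reachable_iff.2 hr, fun hc => hnr (rIn_of_comp_avoid hc)⟩

lemma comp_share_iff (hH : H.Connected) {u v : V} :
    Share (compG H) u v ↔ Share H u v := by
  by_cases huv : u = v
  · subst huv
    simp only [iff_true_intro (share_refl (G := compG H) u),
      iff_true_intro (share_refl (G := H) u)]
  · rw [share_iff_forall_avoid (comp_connected hH) huv, share_iff_forall_avoid hH huv]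
    constructor
    · intro h w h1 h2
      exact rIn_of_comp_avoid (h w h1 h2)
    · intro h w h1 h2
      exact rIn_comp_of_rIn (h w h1 h2)

lemma comp_block_iff (hH : H.Connected) {B : Set V} :
    IsBlock (compG H) B ↔ IsBlock H B := by
  rw [block_iff_share, block_iff_share]
  constructor
  · rintro ⟨h1, h2, h3⟩
    exact ⟨h1, fun a ha b hb => (comp_share_iff hH).1 (h2 a ha b hb),
      fun x hx => h3 x (fun a ha => (comp_share_iff hH).2 (hx a ha))⟩
  · rintro ⟨h1, h2, h3⟩
    exact ⟨h1, fun a ha b hb => (comp_share_iff hH).2 (h2 a ha b hb),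
      fun x hx => h3 x (fun a ha => (comp_share_iff hH).1 (hx a ha))⟩

lemma comp_blockGraph (hH : H.Connected) : IsBlockGraph (compG H) := by
  intro B hB u hu v hv hne
  exact ⟨hne, B, (comp_block_iff hH).1 hB, hu, hv⟩

lemma part1_iso (hH : H.Connected) : BTIso (compG H) H := by
  refine ⟨Equiv.sumCongr (Equiv.subtypeEquivRight (fun v => comp_cut_iff hH))
    (Equiv.subtypeEquivRight (fun B => comp_block_iff hH)), ?_, ?_⟩
  · intro x y
    cases x with
    | inl v =>
        cases y with
        | inl w =>
            constructor
            · intro h; exact absurd h bt_not_inl_inl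
            · intro h; exact absurd h bt_not_inl_inl
        | inr B =>
            exact Iff.trans bt_adj_inl_inr (Iff.symm bt_adj_inl_inr)
    | inr B =>
        cases y with
        | inl w =>
            exact Iff.trans bt_adj_inr_inl (Iff.symm bt_adj_inr_inl)
        | inr B' =>
            constructor
            · intro h; exact absurd h bt_not_inr_inr
            · intro h; exact absurd h bt_not_inr_inr
  · intro x
    cases x with
    | inl v => rfl
    | inr B =>
        show (B.1 \ {v | IsCutVertex H v}).ncard = (B.1 \ {v | IsCutVertex (compG H) v}).ncard
        congr 1
        ext z
        simp only [Set.mem_diff, Set.mem_setOf_eq]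
        rw [comp_cut_iff hH]

end BG

/-- The weighted block tree map is a bijection (up to isomorphism) between connected
block graphs on n vertices and weighted block trees of weight n (= weighted block trees
of connected graphs on n vertices). -/
theorem stmt_12 (n : ℕ) :
    (∀ H : SimpleGraph (Fin n), H.Connected →
      ∃ G : SimpleGraph (Fin n), G.Connected ∧ IsBlockGraph G ∧ BTIso G H) ∧
    (∀ G G' : SimpleGraph (Fin n), G.Connected → IsBlockGraph G →
      G'.Connected → IsBlockGraph G' → BTIso G G' →
      ∃ e : Fin n ≃ Fin n, ∀ x y, G.Adj x y ↔ G'.Adj (e x) (e y)) := by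
  constructor
  · intro H hH
    exact ⟨BG.compG H, BG.comp_connected hH, BG.comp_blockGraph hH, BG.part1_iso hH⟩
  · intro G G' hG hbg hG' hbg' hiso
    exact BG.part2_iso hG hbg hG' hbg' hiso
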